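/- arXiv:1911.00074 — 2 statements merged into one kernel-verified Lean document; each statement's English description precedes it below -/
import Mathlib

section
/- Let E → F → A → E[1] (with second map g : F → A) and F → G → B → F[1] (with third map f : B → F[1]) be distinguished triangles in 𝒯, where the first map of the second triangle is the second map composed appropriately, i.e. the object F is common to both triangles. (a) If the composite g[1] ∘ f : B → A[1] is the zero morphism, then there exist an object F'' of 𝒯 and morphisms such that E → F'' → B → E[1] and F'' → G → A → F''[1] are distinguished triangles. (b) If g[1] ∘ f : B → A[1] is an isomorphism, then the composite E → F → G of the first maps of the two given triangles is an isomorphism. -/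
open CategoryTheory Limits Pretriangulated

universe v u

namespace NC

/-- Lemma on interchanging / composing the cones of two distinguished triangles with a common
middle object `F`, in a triangulated category `T` (satisfying the octahedral axiom):

(a) if `g⟦1⟧' ∘ f = 0` then there are distinguished triangles `E ⟶ F'' ⟶ B ⟶ E⟦1⟧` and
`F'' ⟶ G ⟶ A ⟶ F''⟦1⟧`;

(b) if `g⟦1⟧' ∘ f` is an isomorphism, then the composite `E ⟶ F ⟶ G` is an isomorphism. -/
theorem statement_0 {T : Type u} [Category.{v} T] [Preadditive T] [HasZeroObject T]
    [HasShift T ℤ] [∀ n : ℤ, (CategoryTheory.shiftFunctor T n).Additive] [Pretriangulated T]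
    [IsTriangulated T]
    {E F G A B : T} (e : E ⟶ F) (g : F ⟶ A) (d : A ⟶ E⟦(1 : ℤ)⟧)
    (u : F ⟶ G) (w : G ⟶ B) (f : B ⟶ F⟦(1 : ℤ)⟧)
    (h₁ : Triangle.mk e g d ∈ (distTriang T))
    (h₂ : Triangle.mk u w f ∈ (distTriang T)) :
    (f ≫ g⟦(1 : ℤ)⟧' = 0 →
      ∃ (F'' : T) (e' : E ⟶ F'') (p : F'' ⟶ B) (q : B ⟶ E⟦(1 : ℤ)⟧)
        (r : F'' ⟶ G) (s : G ⟶ A) (t : A ⟶ F''⟦(1 : ℤ)⟧),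
        Triangle.mk e' p q ∈ (distTriang T) ∧ Triangle.mk r s t ∈ (distTriang T)) ∧
    (IsIso (f ≫ g⟦(1 : ℤ)⟧') → IsIso (e ≫ u)) := by
  constructor
  · intro hzero
    -- Factor `f` through `E⟦1⟧` using the long exact sequence of the rotated triangle `h₁`.
    obtain ⟨q', hq'⟩ := Triangle.coyoneda_exact₃ _
      (rot_of_distTriang _ (rot_of_distTriang _ h₁)) f
      (by change f ≫ (-(g⟦(1 : ℤ)⟧')) = 0; rw [Preadditive.comp_neg, hzero, neg_zero])
    change f = q' ≫ (-(e⟦(1 : ℤ)⟧')) at hq'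
    have hqe : (-q') ≫ e⟦(1 : ℤ)⟧' = f := by
      rw [hq']; exact (Preadditive.neg_comp _ _).trans (Preadditive.comp_neg _ _).symm
    set q : B ⟶ E⟦(1 : ℤ)⟧ := -q' with hqdef
    -- Complete `q` into a distinguished triangle `E ⟶ F'' ⟶ B ⟶ E⟦1⟧`.
    obtain ⟨F'', e', p, hq⟩ := distinguished_cocone_triangle₂ q
    -- Apply the octahedral axiom to `B⟦-1⟧ ⟶ E ⟶ F`.
    have h₁₂' := inv_rot_of_distTriang _ hq
    have h₁₃' := inv_rot_of_distTriang _ h₂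
    have comm : (Triangle.mk e' p q).invRotate.mor₁ ≫ e
        = (Triangle.mk u w f).invRotate.mor₁ := by
      change (-(q⟦(-1:ℤ)⟧' ≫ (shiftFunctorCompIsoId T (1 : ℤ) (-1) (by omega)).hom.app E)) ≫ e = -(f⟦(-1:ℤ)⟧' ≫ (shiftFunctorCompIsoId T (1 : ℤ) (-1) (by omega)).hom.app F)
      rw [Preadditive.neg_comp, Category.assoc, neg_inj]
      erw [← (shiftFunctorCompIsoId T (1 : ℤ) (-1) (by omega)).hom.naturality e]
      simp only [Functor.comp_map, ← Functor.map_comp_assoc, hqe]; exact congrArg (· ≫ (shiftFunctorCompIsoId T (1 : ℤ) (-1) (by omega)).hom.app F) (congrArg (shiftFunctor T (-1 : ℤ)).map hqe)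
    have oct := Triangulated.someOctahedron comm h₁₂' h₁ h₁₃'
    exact ⟨F'', e', p, q, oct.m₁, oct.m₃, d ≫ e'⟦(1 : ℤ)⟧', hq, oct.mem⟩
  · intro hiso
    obtain ⟨Ch, v, wm, hC⟩ := distinguished_cocone_triangle (e ≫ u)
    have oct := Triangulated.someOctahedron rfl h₁ h₂ hC
    have hz : IsZero Ch := Triangle.isZero₂_of_isIso₃ _ oct.mem hiso
    exact (Triangle.isZero₃_iff_isIso₁ _ hC).1 hz

end NC
end

section
/- Let σ be a locally finite stability condition on 𝒯 and let ℰ = (E₀, …, Eₙ) be a full σ-exceptional collection with φ_σ(Eᵢ) < φ_σ(Eᵢ₊₁) for all 0 ≤ i < n. Then every σ-semistable exceptional object of 𝒯 is isomorphic to Eᵢ[j] for some 0 ≤ i ≤ n and j ∈ ℤ; in particular, up to shift and isomorphism there are exactly n+1 σ-semistable exceptional objects in 𝒯. -/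
open CategoryTheory Limits Pretriangulated

universe v u

namespace NC

variable (T : Type u) [Category.{v} T] [Preadditive T] [HasZeroObject T]
  [HasShift T ℤ] [∀ n : ℤ, (CategoryTheory.shiftFunctor T n).Additive] [Pretriangulated T]

/-- A Bridgeland stability condition on the pretriangulated category `T`.
The slicing `𝒫` is encoded by the classes of objects `P φ` (strictly full additive
subcategories), and the central charge is encoded as a function on objects which is
additive on distinguished triangles (equivalently, a group homomorphism `K₀(T) → ℂ`).
(The technical condition of local finiteness is not encoded.) -/
structure Stab where
  /-- the slicing: `P φ` is the class of objects of `𝒫(φ)` -/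
  P : ℝ → Set T
  /-- the central charge -/
  Z : T → ℂ
  iso_closed : ∀ {X Y : T}, (X ≅ Y) → ∀ {φ : ℝ}, X ∈ P φ → Y ∈ P φ
  zero_mem : ∀ {X : T}, IsZero X → ∀ φ : ℝ, X ∈ P φ
  shift_mem : ∀ (X : T) (φ : ℝ), X ∈ P φ ↔ X⟦(1 : ℤ)⟧ ∈ P (φ + 1)
  hom_zero : ∀ {X Y : T} {φ ψ : ℝ}, X ∈ P φ → Y ∈ P ψ → ψ < φ → ∀ f : X ⟶ Y, f = 0
  Z_additive : ∀ Tr : Triangle T, Tr ∈ (distTriang T) → Z Tr.obj₂ = Z Tr.obj₁ + Z Tr.obj₃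
  Z_phase : ∀ {A : T} {φ : ℝ}, A ∈ P φ → ¬ IsZero A →
      ∃ m : ℝ, 0 < m ∧ Z A = (m : ℂ) * Complex.exp ((Real.pi * φ : ℝ) * Complex.I)
  HN : ∀ X : T, ¬ IsZero X → ∃ (n : ℕ) (F : Fin (n + 1) → T) (φs : Fin n → ℝ)
      (A : Fin n → T),
      IsZero (F 0) ∧ F (Fin.last n) = X ∧
      (∀ i : Fin n, A i ∈ P (φs i) ∧ ¬ IsZero (A i)) ∧
      (∀ i j : Fin n, i < j → φs j < φs i) ∧
      (∀ i : Fin n, ∃ (f : F i.castSucc ⟶ F i.succ) (g : F i.succ ⟶ A i)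
        (h : A i ⟶ (F i.castSucc)⟦(1 : ℤ)⟧), Triangle.mk f g h ∈ (distTriang T))

variable {T}

/-- an object is `σ`-semistable if it is a nonzero object of some `𝒫(φ)` -/
def Stab.semistable (σ : Stab T) (X : T) : Prop := ¬ IsZero X ∧ ∃ φ : ℝ, X ∈ σ.P φ

/-- `X` is `σ`-semistable of phase `φ` -/
def Stab.hasPhase (σ : Stab T) (X : T) (φ : ℝ) : Prop := ¬ IsZero X ∧ X ∈ σ.P φ

/-- membership in the smallest strictly full triangulated subcategory of `T`
containing the class `S` -/
inductive GeneratedBy (S : Set T) : T → Prop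
  | of {X : T} (hX : X ∈ S) : GeneratedBy S X
  | zero {X : T} (hX : IsZero X) : GeneratedBy S X
  | iso {X Y : T} (e : X ≅ Y) (hX : GeneratedBy S X) : GeneratedBy S Y
  | shift {X : T} (n : ℤ) (hX : GeneratedBy S X) : GeneratedBy S (X⟦n⟧)
  | ext (Tr : Triangle T) (hTr : Tr ∈ (distTriang T)) (h₁ : GeneratedBy S Tr.obj₁)
      (h₃ : GeneratedBy S Tr.obj₃) : GeneratedBy S Tr.obj₂

section LinearDefs

variable (K : Type) [Field K] [CategoryTheory.Linear K T]

/-- an exceptional object of the `K`-linear category `T`: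
`Hom(E, E) = K` and `Hom(E, E⟦n⟧) = 0` for `n ≠ 0` -/
def IsExcT (E : T) : Prop :=
  Module.finrank K (E ⟶ E) = 1 ∧ ∀ n : ℤ, n ≠ 0 → ∀ f : E ⟶ E⟦n⟧, f = 0

/-- properness of the `K`-linear category `T`: `∑ᵢ hom^i(X, Y) < ∞` for all `X`, `Y` -/
def IsProper : Prop :=
  ∀ X Y : T, {n : ℤ | ∃ f : X ⟶ Y⟦n⟧, f ≠ 0}.Finite ∧
    ∀ n : ℤ, FiniteDimensional K (X ⟶ Y⟦n⟧)

end LinearDefs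

/-- the vertices of the triangular quiver -/
inductive V3 : Type | x | z | y

/-- the arrows of the triangular quiver: `x ⟶ z`, `z ⟶ y`, `x ⟶ y` -/
inductive A3 : V3 → V3 → Type
  | xz : A3 .x .z
  | zy : A3 .z .y
  | xy : A3 .x .y

instance : Quiver V3 := ⟨A3⟩

/-- the category of all representations of the quiver `V` over `K`,
i.e. functors from the path category of `V` to `K`-vector spaces -/
abbrev RepAll (K : Type) [Field K] (V : Type) [Quiver.{0} V] := Paths V ⥤ ModuleCat.{0} K

/-- finite dimensionality of a representation -/
def fd (K : Type) [Field K] {V : Type} [Quiver.{0} V] (F : RepAll K V) : Prop :=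
  ∀ v : Paths V, FiniteDimensional K (F.obj v)

/-- the category of finite-dimensional representations of the quiver `V` over `K` -/
abbrev Rep (K : Type) [Field K] (V : Type) [Quiver.{0} V] :=
  ObjectProperty.FullSubcategory (fun F : RepAll K V => fd K F)

/-- the dimension of a representation of the triangular quiver at a vertex -/
noncomputable def dimAt (K : Type) [Field K] (F : RepAll K V3) (v : V3) : ℕ :=
  Module.finrank K (F.obj ((Paths.of V3).obj v))

/-- `F` has dimension vector `(nx, nz, ny)` at the vertices `(x, z, y)` -/
def dimVec (K : Type) [Field K] (F : RepAll K V3) (nx nz ny : ℕ) : Prop :=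
  dimAt K F .x = nx ∧ dimAt K F .z = nz ∧ dimAt K F .y = ny

/-- A representation `E` is exceptional if `End(E) = 𝕂` and `Ext¹(E, E) = 0`
(i.e. every self-extension of `E` splits). -/
def IsExcRep (K : Type) [Field K] {V : Type} [Quiver.{0} V] (E : Rep K V) : Prop :=
  Module.finrank K (E.obj ⟶ E.obj) = 1 ∧
  ∀ S : ShortComplex (RepAll K V), S.ShortExact → (S.X₁ ≅ E.obj) → (S.X₃ ≅ E.obj) →
    Nonempty S.Splitting

variable (T)

/-- Data exhibiting the pretriangulated `K`-linear category `T` as (a model of) the bounded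
derived category `D^b(Rep_K V)` of the finite-dimensional representations of the quiver `V`:
a fully faithful additive `K`-linear embedding `ι` of the heart such that homs between heart
objects are concentrated in shift-degrees `0` and `1` (the heart is hereditary), short exact
sequences of representations induce distinguished triangles, the cone of any map
`ι X → (ι Y)⟦1⟧` lies in the heart, and every object decomposes as a finite direct sum of
shifts of heart objects. -/
structure DerivedEmbedding (K : Type) [Field K] (V : Type) [Quiver.{0} V]
    [CategoryTheory.Linear K T] [HasFiniteBiproducts T] where
  ι : Rep K V ⥤ T
  full : ι.Full
  faithful : ι.Faithful
  additive : ι.Additive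
  linear : ι.Linear K
  hom_vanish : ∀ (X Y : Rep K V) (n : ℤ), n ≠ 0 → n ≠ 1 →
      ∀ f : ι.obj X ⟶ (ι.obj Y)⟦n⟧, f = 0
  triangle_of_ses : ∀ (S : ShortComplex (RepAll K V)) (_ : S.ShortExact)
      (h₁ : fd K S.X₁) (h₂ : fd K S.X₂) (h₃ : fd K S.X₃),
      ∃ δ : ι.obj ⟨S.X₃, h₃⟩ ⟶ (ι.obj ⟨S.X₁, h₁⟩)⟦(1 : ℤ)⟧,
        Triangle.mk (ι.map (X := ⟨S.X₁, h₁⟩) (Y := ⟨S.X₂, h₂⟩) (ObjectProperty.homMk S.f))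
          (ι.map (X := ⟨S.X₂, h₂⟩) (Y := ⟨S.X₃, h₃⟩) (ObjectProperty.homMk S.g)) δ ∈ (distTriang T)
  heart_ext : ∀ (X Y : Rep K V) (W : T) (f : ι.obj Y ⟶ W) (g : W ⟶ ι.obj X)
      (δ : ι.obj X ⟶ (ι.obj Y)⟦(1 : ℤ)⟧), Triangle.mk f g δ ∈ (distTriang T) →
      ∃ Z : Rep K V, Nonempty (W ≅ ι.obj Z)
  decomp : ∀ W : T, ∃ (n : ℕ) (R : Fin n → Rep K V) (k : Fin n → ℤ),
      Nonempty (W ≅ ⨁ (fun i : Fin n => (ι.obj (R i))⟦k i⟧))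

variable (K : Type) [Field K] [CategoryTheory.Linear K T] [HasFiniteBiproducts T]

/-- The standard set-up on the triangular quiver: `T` is a model of `D^b(Rep_K Q)` where `Q`
is the triangular quiver, and `E₁ E₂ E₃ E₄ M M'` are the exceptional representations with
the indicated dimension vectors (each is unique up to isomorphism). -/
structure TriSetup where
  D : DerivedEmbedding T K V3
  E₁ : ℕ → Rep K V3
  E₂ : ℕ → Rep K V3
  E₃ : ℕ → Rep K V3
  E₄ : ℕ → Rep K V3
  M : Rep K V3
  M' : Rep K V3
  hE₁ : ∀ m : ℕ, IsExcRep K (E₁ m) ∧ dimVec K (E₁ m).obj (m + 1) m m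
  hE₂ : ∀ m : ℕ, IsExcRep K (E₂ m) ∧ dimVec K (E₂ m).obj m (m + 1) (m + 1)
  hE₃ : ∀ m : ℕ, IsExcRep K (E₃ m) ∧ dimVec K (E₃ m).obj m (m + 1) m
  hE₄ : ∀ m : ℕ, IsExcRep K (E₄ m) ∧ dimVec K (E₄ m).obj (m + 1) m (m + 1)
  hM : IsExcRep K M ∧ dimVec K M.obj 0 0 1
  hM' : IsExcRep K M' ∧ dimVec K M'.obj 1 1 0

variable {T K}

/-- the objects `a^m` of `𝒯`: `a^m = E₁^{-m}` for `m ≤ 0` and `a^m = E₂^{m-1}[1]` for `m ≥ 1` -/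
noncomputable def TriSetup.a (S : TriSetup T K) (m : ℤ) : T :=
  if m ≤ 0 then S.D.ι.obj (S.E₁ (-m).toNat) else (S.D.ι.obj (S.E₂ (m - 1).toNat))⟦(1 : ℤ)⟧

/-- the objects `b^m` of `𝒯`: `b^m = E₄^{-m}` for `m ≤ 0` and `b^m = E₃^{m-1}[1]` for `m ≥ 1` -/
noncomputable def TriSetup.b (S : TriSetup T K) (m : ℤ) : T :=
  if m ≤ 0 then S.D.ι.obj (S.E₄ (-m).toNat) else (S.D.ι.obj (S.E₃ (m - 1).toNat))⟦(1 : ℤ)⟧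

/-- the object `M` of `𝒯` -/
noncomputable def TriSetup.Mo (S : TriSetup T K) : T := S.D.ι.obj S.M

/-- the object `M'` of `𝒯` -/
noncomputable def TriSetup.Mo' (S : TriSetup T K) : T := S.D.ι.obj S.M'


section AuxNC
set_option linter.unusedSectionVars false
set_option linter.unnecessarySeqFocus false

variable {K : Type} [Field K]
variable {T : Type u} [Category.{v} T] [Preadditive T] [HasZeroObject T] [HasShift T ℤ]
  [∀ n : ℤ, (CategoryTheory.shiftFunctor T n).Additive] [Pretriangulated T]
  [CategoryTheory.Linear K T]

lemma aux_isZero_shift {X : T} (h : IsZero X) (a : ℤ) : IsZero ((X⟦a⟧ : T)) := by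
  rw [IsZero.iff_id_eq_zero] at h ⊢
  rw [show (𝟙 ((X⟦a⟧ : T))) = (𝟙 X)⟦a⟧' from (CategoryTheory.Functor.map_id _ _).symm, h, Functor.map_zero]

lemma aux_isZero_of_shift {X : T} (a : ℤ) (h : IsZero ((X⟦a⟧ : T))) : IsZero X :=
  (aux_isZero_shift h (-a)).of_iso (shiftShiftNeg X a).symm

lemma aux_shift_ne_zero {X Y : T} {f : X ⟶ Y} (hf : f ≠ 0) (a : ℤ) :
    (f⟦a⟧' : X⟦a⟧ ⟶ Y⟦a⟧) ≠ 0 := by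
  intro h
  exact hf ((shiftFunctor T a).map_injective (by rw [h, Functor.map_zero]))

/-- hom equivalence for shifts -/
noncomputable def shEq (a : ℤ) (X Y : T) : ((X⟦a⟧ : T) ⟶ Y) ≃ (X ⟶ (Y⟦-a⟧ : T)) :=
  (shiftEquiv T a).toAdjunction.homEquiv X Y

lemma shEq_zero (a : ℤ) (X Y : T) : shEq a X Y 0 = 0 := by
  unfold shEq
  erw [Adjunction.homEquiv_unit, Functor.map_zero, comp_zero]
  rfl

lemma shEq_symm_zero (a : ℤ) (X Y : T) : (shEq a X Y).symm 0 = 0 := by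
  unfold shEq
  erw [Adjunction.homEquiv_counit, Functor.map_zero, zero_comp]
  rfl

lemma shEq_ne_zero_iff (a : ℤ) (X Y : T) (f : (X⟦a⟧ : T) ⟶ Y) :
    shEq a X Y f ≠ 0 ↔ f ≠ 0 := by
  constructor
  · intro h hf; exact h (by rw [hf, shEq_zero])
  · intro hf h
    exact hf (by
      have := congrArg ((shEq a X Y).symm) h
      rwa [Equiv.symm_apply_apply, shEq_symm_zero] at this)

/-- postcomposition with an isomorphism, as a linear equivalence -/
noncomputable def homCongrRight (X : T) {Y Z : T} (e : Y ≅ Z) : (X ⟶ Y) ≃ₗ[K] (X ⟶ Z) :=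
  LinearEquiv.ofLinear (Linear.rightComp K X e.hom) (Linear.rightComp K X e.inv)
    (by ext f; simp) (by ext f; simp)

lemma Stab.mem_shift (σ : Stab T) {X : T} {φ : ℝ} (h : X ∈ σ.P φ) (a : ℤ) :
    (X⟦a⟧ : T) ∈ σ.P (φ + a) := by
  induction a using Int.induction_on with
  | zero =>
    refine σ.iso_closed ((shiftFunctorZero T ℤ).app X).symm ?_
    simpa using h
  | succ k ih =>
    have h1 := (σ.shift_mem (X⟦(k:ℤ)⟧) (φ + k)).1 ih
    have e : (X⟦(k:ℤ)⟧⟦(1:ℤ)⟧ : T) ≅ X⟦(k:ℤ)+1⟧ :=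
      ((shiftFunctorAdd T (k : ℤ) 1).app X).symm
    have := σ.iso_closed e h1
    convert this using 2 <;> push_cast <;> ring
  | pred k ih =>
    have e : ((X⟦(-k:ℤ)-1⟧)⟦(1:ℤ)⟧ : T) ≅ X⟦(-k:ℤ)⟧ := by
      refine ((shiftFunctorAdd' T ((-k:ℤ)-1) 1 (-k:ℤ) (by ring)).app X).symm ≪≫ ?_
      exact Iso.refl _
    have h1 : ((X⟦(-k:ℤ)-1⟧)⟦(1:ℤ)⟧ : T) ∈ σ.P (φ + (-k:ℤ)) := σ.iso_closed e.symm ih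
    have h2 := (σ.shift_mem (X⟦(-k:ℤ)-1⟧) (φ + (-k:ℤ) - 1)).2 (by convert h1 using 2; ring)
    convert h2 using 2 <;> push_cast <;> ring

end AuxNC
section AuxNC2
set_option linter.unusedSectionVars false

/-- Bundle of all the hypotheses of the main theorem. -/
structure Ctx (K : Type) [Field K] (T : Type u) [Category.{v} T] [Preadditive T]
    [HasZeroObject T] [HasShift T ℤ] [∀ n : ℤ, (CategoryTheory.shiftFunctor T n).Additive]
    [Pretriangulated T] [CategoryTheory.Linear K T] where
  σ : Stab T
  n : ℕ
  E : Fin (n + 1) → T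
  φs : Fin (n + 1) → ℝ
  hproper : IsProper (T := T) K
  hexc : ∀ i, IsExcT K (E i)
  hcoll : ∀ i j : Fin (n + 1), j < i → ∀ (k : ℤ) (f : E i ⟶ (E j)⟦k⟧), f = 0
  hfull : ∀ X : T, GeneratedBy (Set.range E) X
  hss : ∀ i, σ.hasPhase (E i) (φs i)
  hExt : ∀ i j : Fin (n + 1), i ≠ j → ∀ k : ℤ, k ≤ 0 → ∀ f : E i ⟶ (E j)⟦k⟧, f = 0
  hgap : ∀ i j : Fin (n + 1), |φs i - φs j| < 1
  hinc : ∀ i j : Fin (n + 1), i < j → φs i < φs j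

variable {K : Type} [Field K]
variable {T : Type u} [Category.{v} T] [Preadditive T] [HasZeroObject T] [HasShift T ℤ]
  [∀ n : ℤ, (CategoryTheory.shiftFunctor T n).Additive] [Pretriangulated T]
  [CategoryTheory.Linear K T]
variable (C : Ctx K T)

/-- the shifted generators -/
noncomputable def Ctx.Go (q : ℤ × Fin (C.n + 1)) : T := (C.E q.2)⟦q.1⟧

/-- there is a nonzero morphism from the shifted generator `Go q` to `Y` -/
def Ctx.nv (Y : T) (q : ℤ × Fin (C.n + 1)) : Prop := ∃ f : C.Go q ⟶ Y, f ≠ 0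

/-- linearization of the lexicographic order on shifts and indices -/
def Ctx.enc (q : ℤ × Fin (C.n + 1)) : ℤ := q.1 * (C.n + 1) + (q.2 : ℤ)

lemma Ctx.enc_inj {q q' : ℤ × Fin (C.n + 1)} (h : C.enc q = C.enc q') : q = q' := by
  have h2 : (q.2 : ℤ) < C.n + 1 := by exact_mod_cast q.2.is_lt
  have h2' : (q'.2 : ℤ) < C.n + 1 := by exact_mod_cast q'.2.is_lt
  have h0 : (0:ℤ) ≤ (q.2 : ℤ) := by positivity
  have h0' : (0:ℤ) ≤ (q'.2 : ℤ) := by positivity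
  unfold Ctx.enc at h
  have hd : (q.1 - q'.1) * ((C.n : ℤ) + 1) = (q'.2:ℤ) - (q.2:ℤ) := by linear_combination h
  have hn : (0:ℤ) ≤ (C.n : ℤ) := by positivity
  have e1 : q.1 = q'.1 := by
    rcases lt_trichotomy q.1 q'.1 with hlt | heq | hgt
    · have := mul_le_mul_of_nonneg_right (show q.1 - q'.1 ≤ -1 by omega)
        (show (0:ℤ) ≤ (C.n:ℤ) + 1 by positivity)
      simp only [neg_one_mul] at this
      omega
    · exact heq
    · have := mul_le_mul_of_nonneg_right (show (1:ℤ) ≤ q.1 - q'.1 by omega)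
        (show (0:ℤ) ≤ (C.n:ℤ) + 1 by positivity)
      simp only [one_mul] at this
      omega
  have e2 : (q.2 : ℤ) = (q'.2 : ℤ) := by
    rw [e1] at hd
    simp at hd
    omega
  refine Prod.ext e1 (Fin.ext ?_)
  exact_mod_cast e2

lemma Ctx.E_ne_zero (c : Fin (C.n + 1)) : ¬ IsZero (C.E c) := (C.hss c).1

lemma Ctx.Go_ne_zero (q : ℤ × Fin (C.n + 1)) : ¬ IsZero (C.Go q) := fun h =>
  C.E_ne_zero q.2 (aux_isZero_of_shift q.1 h)

lemma Ctx.Go_mem (q : ℤ × Fin (C.n + 1)) : C.Go q ∈ C.σ.P (C.φs q.2 + q.1) :=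
  C.σ.mem_shift (C.hss q.2).2 q.1

/-- bridge a nonzero morphism between shifted generators to an unshifted one -/
lemma Ctx.bridgeGo {q q' : ℤ × Fin (C.n + 1)} (f : C.Go q ⟶ C.Go q') (hf : f ≠ 0) :
    ∃ g : C.E q.2 ⟶ (C.E q'.2)⟦q'.1 - q.1⟧, g ≠ 0 := by
  have h0 : shEq q.1 (C.E q.2) (C.Go q') f ≠ 0 := (shEq_ne_zero_iff _ _ _ f).2 hf
  have ω : ((C.Go q')⟦-q.1⟧ : T) ≅ (C.E q'.2)⟦q'.1 - q.1⟧ :=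
    ((shiftFunctorAdd' T q'.1 (-q.1) (q'.1 - q.1) (by ring)).app (C.E q'.2)).symm
  refine ⟨shEq q.1 (C.E q.2) (C.Go q') f ≫ ω.hom, fun h => h0 ?_⟩
  have := congrArg (fun g => g ≫ ω.inv) h
  simpa using this

lemma Ctx.homEE {c c' : Fin (C.n + 1)} {k : ℤ} (f : C.E c ⟶ (C.E c')⟦k⟧) (hf : f ≠ 0) :
    (c = c' ∧ k = 0) ∨ (c < c' ∧ 1 ≤ k) := by
  rcases lt_trichotomy c c' with h | h | h
  · by_cases hk : 1 ≤ k
    · exact Or.inr ⟨h, hk⟩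
    · exact absurd (C.hExt c c' (ne_of_lt h) k (by omega) f) hf
  · subst h
    by_cases hk : k = 0
    · exact Or.inl ⟨rfl, hk⟩
    · exact absurd ((C.hexc c).2 k hk f) hf
  · exact absurd (C.hcoll c c' h k f) hf

lemma Ctx.GoEE {q q' : ℤ × Fin (C.n + 1)} (f : C.Go q ⟶ C.Go q') (hf : f ≠ 0) :
    q = q' ∨ (q.2 < q'.2 ∧ q.1 < q'.1) := by
  obtain ⟨g, hg⟩ := C.bridgeGo f hf
  rcases C.homEE g hg with ⟨h1, h2⟩ | ⟨h1, h2⟩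
  · refine Or.inl (Prod.ext (by omega) h1)
  · exact Or.inr ⟨h1, by omega⟩

lemma Ctx.GoEE_enc {q q' : ℤ × Fin (C.n + 1)} (f : C.Go q ⟶ C.Go q') (hf : f ≠ 0) :
    C.enc q ≤ C.enc q' := by
  have h2 : (q.2 : ℤ) < C.n + 1 := by exact_mod_cast q.2.is_lt
  have h0' : (0:ℤ) ≤ (q'.2 : ℤ) := by positivity
  rcases C.GoEE f hf with rfl | ⟨h1, h2'⟩
  · exact le_refl _
  · have h3 : (q.2 : ℤ) < (q'.2 : ℤ) := by exact_mod_cast h1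
    have h4 : (0:ℤ) ≤ (C.n : ℤ) := by positivity
    unfold Ctx.enc
    nlinarith

end AuxNC2
section AuxNC3
set_option linter.unusedSectionVars false

variable {K : Type} [Field K]
variable {T : Type u} [Category.{v} T] [Preadditive T] [HasZeroObject T] [HasShift T ℤ]
  [∀ n : ℤ, (CategoryTheory.shiftFunctor T n).Additive] [Pretriangulated T]
  [CategoryTheory.Linear K T]
variable (C : Ctx K T)

lemma Ctx.nv_iff (Y : T) (q : ℤ × Fin (C.n + 1)) :
    C.nv Y q ↔ ∃ g : C.E q.2 ⟶ (Y⟦-q.1⟧ : T), g ≠ 0 := by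
  constructor
  · rintro ⟨f, hf⟩
    exact ⟨shEq q.1 _ _ f, (shEq_ne_zero_iff _ _ _ f).2 hf⟩
  · rintro ⟨g, hg⟩
    refine ⟨(shEq q.1 (C.E q.2) Y).symm g, fun h => hg ?_⟩
    have := congrArg (shEq q.1 (C.E q.2) Y) h
    rw [Equiv.apply_symm_apply] at this
    exact this.trans (shEq_zero _ _ _)

lemma Ctx.nv_finite (Y : T) : {q : ℤ × Fin (C.n + 1) | C.nv Y q}.Finite := by
  have : {q : ℤ × Fin (C.n + 1) | C.nv Y q} ⊆
      ⋃ c : Fin (C.n + 1), (fun m => ((-m : ℤ), c)) ''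
        {m : ℤ | ∃ g : C.E c ⟶ (Y⟦m⟧ : T), g ≠ 0} := by
    rintro ⟨t, c⟩ hq
    obtain ⟨g, hg⟩ := (C.nv_iff Y (t, c)).1 hq
    exact Set.mem_iUnion.2 ⟨c, ⟨-t, ⟨g, hg⟩, by simp⟩⟩
  exact Set.Finite.subset
    (Set.finite_iUnion fun c => ((C.hproper (C.E c) Y).1).image _) this

lemma Ctx.gen_vanish (Y : T) (h0 : ∀ q, ∀ f : C.Go q ⟶ Y, f = 0)
    (W : T) (hW : GeneratedBy (Set.range C.E) W) :
    ∀ (m : ℤ) (f : (W⟦m⟧ : T) ⟶ Y), f = 0 := by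
  induction hW with
  | @of X hX =>
    intro m f
    obtain ⟨c, rfl⟩ := hX
    exact h0 (m, c) f
  | @zero X hX =>
    intro m f
    exact (aux_isZero_shift hX m).eq_of_src f 0
  | @iso X X' e hX ih =>
    intro m f
    have h1 : e.hom⟦m⟧' ≫ f = 0 := ih m _
    have := congrArg (fun g => e.inv⟦m⟧' ≫ g) h1
    simpa [← Functor.map_comp_assoc] using this
  | @shift X k hX ih =>
    intro m f
    have hiso : (X⟦k + m⟧ : T) ≅ ((X⟦k⟧)⟦m⟧ : T) := (shiftFunctorAdd T k m).app X
    have h1 : hiso.hom ≫ f = 0 := ih (k + m) _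
    have := congrArg (fun g => hiso.inv ≫ g) h1
    simpa using this
  | @ext Tr hTr h₁ h₃ ih₁ ih₃ =>
    intro m f
    have hsh := Pretriangulated.Triangle.shift_distinguished Tr hTr m
    set Tsh := (CategoryTheory.shiftFunctor (Triangle T) m).obj Tr with hTsh
    have hf : Tsh.mor₁ ≫ f = 0 := ih₁ m _
    obtain ⟨g, hg⟩ := Pretriangulated.Triangle.yoneda_exact₂ Tsh hsh f hf
    rw [hg, ih₃ m g]
    exact comp_zero

lemma Ctx.nv_nonempty (Y : T) (hY : ¬ IsZero Y) : ∃ q, C.nv Y q := by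
  by_contra h
  push_neg at h
  have h0 : ∀ q, ∀ f : C.Go q ⟶ Y, f = 0 := by
    intro q f
    by_contra hf
    exact (h q) ⟨f, hf⟩
  have := C.gen_vanish Y h0 Y (C.hfull Y) 0 ((shiftFunctorZero T ℤ).app Y).hom
  apply hY
  rw [IsZero.iff_id_eq_zero]
  calc 𝟙 Y = ((shiftFunctorZero T ℤ).app Y).inv ≫ ((shiftFunctorZero T ℤ).app Y).hom := by simp
  _ = 0 := by rw [this, comp_zero]

lemma Ctx.exists_max (Y : T) (hY : ¬ IsZero Y) :
    ∃ qm, C.nv Y qm ∧ ∀ q, C.nv Y q → C.enc q ≤ C.enc qm := by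
  obtain ⟨a, ha, hmax⟩ := Set.Finite.exists_maximalFor C.enc _ (C.nv_finite Y)
    (Set.nonempty_of_mem (C.nv_nonempty Y hY).choose_spec)
  refine ⟨a, ha, fun q hq => ?_⟩
  by_contra hlt
  push_neg at hlt
  exact absurd (hmax hq (le_of_lt hlt)) (by omega)

lemma Ctx.fdHom (c : Fin (C.n + 1)) (Y : T) (m : ℤ) :
    FiniteDimensional K (C.E c ⟶ (Y⟦m⟧ : T)) := (C.hproper _ _).2 m

lemma aux_fdEnd (X : T) (hp : IsProper (T := T) K) : FiniteDimensional K (X ⟶ X) := by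
  have h1 : FiniteDimensional K (X ⟶ (X⟦(0:ℤ)⟧ : T)) := (hp X X).2 0
  exact (homCongrRight (K := K) X ((shiftFunctorZero T ℤ).app X)).finiteDimensional

lemma aux_scalar {V : Type*} [AddCommGroup V] [Module K V] [FiniteDimensional K V]
    (h1 : Module.finrank K V = 1) {v : V} (hv : v ≠ 0) (w : V) : ∃ a : K, w = a • v := by
  have hsp : Submodule.span K {v} = ⊤ := by
    apply Submodule.eq_top_of_finrank_eq
    rw [finrank_span_singleton hv, h1]
  have hw : w ∈ Submodule.span K ({v} : Set V) := by rw [hsp]; trivial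
  obtain ⟨a, ha⟩ := Submodule.mem_span_singleton.1 hw
  exact ⟨a, ha.symm⟩

lemma Ctx.isIso_of_ne_zero (q : ℤ × Fin (C.n + 1)) (h : C.Go q ⟶ C.Go q) (hne : h ≠ 0) :
    IsIso h := by
  set c := q.2
  have κ : ((C.Go q)⟦-q.1⟧ : T) ≅ C.E c := shiftShiftNeg (C.E c) q.1
  have h1ne : shEq q.1 (C.E c) (C.Go q) h ≠ 0 := (shEq_ne_zero_iff _ _ _ h).2 hne
  set h1 : C.E c ⟶ ((C.Go q)⟦-q.1⟧ : T) := shEq q.1 (C.E c) (C.Go q) h with hh1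
  have h2ne : h1 ≫ κ.hom ≠ 0 := by
    intro h2z
    apply h1ne
    have := congrArg (fun g => g ≫ κ.inv) h2z
    simpa [hh1] using this
  haveI := aux_fdEnd (K := K) (C.E c) C.hproper
  have hid : (𝟙 (C.E c) : C.E c ⟶ C.E c) ≠ 0 := by
    intro hz
    exact C.E_ne_zero c (by rw [IsZero.iff_id_eq_zero]; exact hz)
  obtain ⟨a, ha⟩ := aux_scalar (K := K) (C.hexc c).1 hid (h1 ≫ κ.hom)
  have hane : a ≠ 0 := by
    intro h0; rw [h0, zero_smul] at ha; exact h2ne ha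
  haveI hIso2 : IsIso (h1 ≫ κ.hom) := by
    rw [ha]
    exact ⟨⟨a⁻¹ • 𝟙 (C.E c), by simp [smul_smul, inv_mul_cancel₀ hane],
      by simp [smul_smul, mul_inv_cancel₀ hane]⟩⟩
  haveI hIso1 : IsIso h1 := by
    rw [show h1 = (h1 ≫ κ.hom) ≫ κ.inv by simp]
    infer_instance
  have hh : h = (shiftFunctor T q.1).map h1 ≫
      ((shiftEquiv T q.1).toAdjunction.counit).app (C.Go q) := by
    have h3 := (shEq q.1 (C.E c) (C.Go q)).symm_apply_apply h
    rw [← hh1] at h3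
    rw [← h3]
    unfold shEq
    erw [Adjunction.homEquiv_counit]
    rfl
  rw [hh]
  haveI : IsIso (((shiftEquiv T q.1).toAdjunction.counit).app (C.Go q)) :=
    inferInstanceAs (IsIso ((shiftEquiv T q.1).counit.app (C.Go q)))
  exact IsIso.comp_isIso' (Iso.isIso_hom ((shiftFunctor T q.1).mapIso (@asIso _ _ _ _ h1 hIso1))) this

end AuxNC3
section AuxNC4
set_option linter.unusedSectionVars false
set_option maxHeartbeats 1000000

variable {K : Type} [Field K]
variable {T : Type u} [Category.{v} T] [Preadditive T] [HasZeroObject T] [HasShift T ℤ]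
  [∀ n : ℤ, (CategoryTheory.shiftFunctor T n).Additive] [Pretriangulated T]
  [CategoryTheory.Linear K T]
variable (C : Ctx K T)

/-- dimension of the space of maps from the generator at the appropriate shift -/
noncomputable def Ctx.hdim (q : ℤ × Fin (C.n + 1)) (Y : T) : ℕ :=
  Module.finrank K (C.E q.2 ⟶ (Y⟦-q.1⟧ : T))

/-- `Go q` shifted once -/
noncomputable def Ctx.GoSucc (q : ℤ × Fin (C.n + 1)) :
    ((C.Go q)⟦(1:ℤ)⟧ : T) ≅ C.Go (q.1 + 1, q.2) :=
  ((shiftFunctorAdd' T q.1 1 (q.1 + 1) rfl).app (C.E q.2)).symm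

lemma Ctx.hdim_pos (q : ℤ × Fin (C.n + 1)) (Y : T) (h : C.nv Y q) : 1 ≤ C.hdim q Y := by
  obtain ⟨g, hg⟩ := (C.nv_iff Y q).1 h
  haveI := C.fdHom q.2 Y (-q.1)
  have := Module.finrank_pos_iff_exists_ne_zero (R := K)
    (M := (C.E q.2 ⟶ (Y⟦-q.1⟧ : T)))
  have h1 : 0 < Module.finrank K (C.E q.2 ⟶ (Y⟦-q.1⟧ : T)) := this.2 ⟨g, hg⟩
  unfold Ctx.hdim
  omega

lemma Ctx.hdim_drop {q : ℤ × Fin (C.n + 1)} {Y Y' : T}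
    (u : C.Go q ⟶ Y) (hu : u ≠ 0) (p : Y ⟶ Y') (δ : Y' ⟶ ((C.Go q)⟦(1:ℤ)⟧ : T))
    (hT : Triangle.mk u p δ ∈ distTriang T) :
    C.hdim q Y = C.hdim q Y' + 1 := by
  set t := q.1
  set c := q.2
  have hsh := Pretriangulated.Triangle.shift_distinguished (Triangle.mk u p δ) hT (-t)
  set Tsh := (CategoryTheory.shiftFunctor (Triangle T) (-t)).obj (Triangle.mk u p δ) with hTshdef
  have κ : ((C.Go q)⟦-t⟧ : T) ≅ C.E c := shiftShiftNeg (C.E c) t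
  -- the fourth space is zero
  have hzero : ∀ h : C.E c ⟶ ((Tsh.obj₁)⟦(1:ℤ)⟧ : T), h = 0 := by
    intro h
    have h2 : h ≫ ((shiftFunctor T (1:ℤ)).mapIso κ).hom = 0 :=
      (C.hexc c).2 1 one_ne_zero _
    have h3 : h ≫ (((shiftFunctor T (1:ℤ)).mapIso κ).hom ≫
        ((shiftFunctor T (1:ℤ)).mapIso κ).inv) = h := by
      exact (congrArg (fun x => h ≫ x) (Iso.hom_inv_id _)).trans (Category.comp_id h)
    erw [← h3, ← Category.assoc, h2, zero_comp]
    rfl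
  haveI hB : FiniteDimensional K (C.E c ⟶ Tsh.obj₂) := C.fdHom c Y (-t)
  haveI hBd : FiniteDimensional K (C.E c ⟶ Tsh.obj₃) := C.fdHom c Y' (-t)
  haveI hEnd : FiniteDimensional K (C.E c ⟶ C.E c) := aux_fdEnd (K := K) _ C.hproper
  haveI hA : FiniteDimensional K (C.E c ⟶ Tsh.obj₁) :=
    (homCongrRight (K := K) (C.E c) κ).symm.finiteDimensional
  set α := Linear.rightComp (R := K) (C.E c) Tsh.mor₁ with hα
  set β := Linear.rightComp (R := K) (C.E c) Tsh.mor₂ with hβ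
  have hsurj : Function.Surjective β := by
    intro g
    obtain ⟨g', hg'⟩ := Pretriangulated.Triangle.coyoneda_exact₃ Tsh hsh g (hzero _)
    exact ⟨g', hg'.symm⟩
  have hker : LinearMap.ker β = LinearMap.range α := by
    ext f
    constructor
    · intro hf
      obtain ⟨g, hg⟩ := Pretriangulated.Triangle.coyoneda_exact₂ Tsh hsh f hf
      exact ⟨g, hg.symm⟩
    · rintro ⟨g, rfl⟩
      show (g ≫ Tsh.mor₁) ≫ Tsh.mor₂ = 0
      rw [Category.assoc, comp_distTriang_mor_zero₁₂ Tsh hsh, comp_zero]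
  have hdimA : Module.finrank K (C.E c ⟶ Tsh.obj₁) = 1 := by
    show Module.finrank K (C.E c ⟶ ((C.Go q)⟦-t⟧ : T)) = 1
    rw [(homCongrRight (K := K) (C.E c) κ).finrank_eq]
    exact (C.hexc c).1
  have hαne : α κ.inv ≠ 0 := by
    intro h0
    have hm : Tsh.mor₁ = 0 := by
      exact (Iso.hom_inv_id_assoc κ _).symm.trans
        ((congrArg (fun x => κ.hom ≫ x) (show κ.inv ≫ Tsh.mor₁ = 0 from h0)).trans comp_zero)
    have hm2 : (u⟦(-t)⟧' : _) = 0 := by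
      have h4 : ((-t).negOnePow • u⟦(-t)⟧' : _) = 0 := hm
      rwa [smul_eq_zero_iff_eq] at h4
    exact aux_shift_ne_zero hu (-t) hm2
  have hrangeα : Module.finrank K (LinearMap.range α) = 1 := by
    have h1 := LinearMap.finrank_range_add_finrank_ker α
    rw [hdimA] at h1
    have h2 : Module.finrank K (LinearMap.range α) ≠ 0 := by
      intro h0
      rw [Submodule.finrank_eq_zero] at h0
      exact hαne (by
        have : α κ.inv ∈ LinearMap.range α := ⟨κ.inv, rfl⟩
        rw [h0] at this
        simpa using this)
    omega
  have hrn := LinearMap.finrank_range_add_finrank_ker β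
  rw [LinearMap.range_eq_top.2 hsurj, finrank_top, hker, hrangeα] at hrn
  show Module.finrank K (C.E c ⟶ Tsh.obj₂) = Module.finrank K (C.E c ⟶ Tsh.obj₃) + 1
  omega

lemma Ctx.key_bound {Y Y' : T} {qm : ℤ × Fin (C.n + 1)}
    (hmax : ∀ q, C.nv Y q → C.enc q ≤ C.enc qm)
    (u : C.Go qm ⟶ Y) (hu : u ≠ 0) (p : Y ⟶ Y') (δ : Y' ⟶ ((C.Go qm)⟦(1:ℤ)⟧ : T))
    (hT : Triangle.mk u p δ ∈ distTriang T) :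
    ∀ q, C.nv Y' q → C.enc q ≤ C.enc qm := by
  rintro q ⟨f, hf⟩
  by_contra hlt
  push_neg at hlt
  by_cases hz : f ≫ δ = 0
  · obtain ⟨g, hg⟩ := Pretriangulated.Triangle.coyoneda_exact₃ _ hT f hz
    have hgne : g ≠ 0 := fun h => hf (by rw [hg, h]; exact zero_comp)
    exact absurd (hmax q ⟨g, hgne⟩) (not_le.2 hlt)
  · have hg2 : (f ≫ δ ≫ (C.GoSucc qm).hom : C.Go q ⟶ C.Go (qm.1 + 1, qm.2)) ≠ 0 := by
      intro h0
      apply hz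
      calc f ≫ δ = (f ≫ δ ≫ (C.GoSucc qm).hom) ≫ (C.GoSucc qm).inv := by simp
      _ = 0 := by rw [h0, zero_comp]
    rcases C.GoEE _ hg2 with heq | ⟨hc, ht⟩
    · -- q = (qm.1+1, qm.2) : then f ≫ δ is invertible, contradiction
      subst heq
      haveI hIso2 : IsIso (f ≫ δ ≫ (C.GoSucc qm).hom) := C.isIso_of_ne_zero _ _ hg2
      have hzero31 : δ ≫ u⟦(1:ℤ)⟧' = 0 := comp_distTriang_mor_zero₃₁ _ hT
      have e1 : (f ≫ δ ≫ (C.GoSucc qm).hom) ≫ ((C.GoSucc qm).inv ≫ u⟦(1:ℤ)⟧') = 0 := by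
        simp only [Category.assoc, Iso.hom_inv_id_assoc]
        rw [hzero31, comp_zero]
      have e2 : (C.GoSucc qm).inv ≫ u⟦(1:ℤ)⟧' = 0 := by
        calc (C.GoSucc qm).inv ≫ u⟦(1:ℤ)⟧'
            = inv (f ≫ δ ≫ (C.GoSucc qm).hom) ≫
              ((f ≫ δ ≫ (C.GoSucc qm).hom) ≫ ((C.GoSucc qm).inv ≫ u⟦(1:ℤ)⟧')) := by
              rw [← Category.assoc, IsIso.inv_hom_id, Category.id_comp]
        _ = 0 := by rw [e1, comp_zero]
      have e3 : (u⟦(1:ℤ)⟧' : _) = 0 := by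
        calc (u⟦(1:ℤ)⟧' : _) = (C.GoSucc qm).hom ≫ ((C.GoSucc qm).inv ≫ u⟦(1:ℤ)⟧') := by
              rw [Iso.hom_inv_id_assoc]
        _ = 0 := by rw [e2, comp_zero]
      exact hu ((shiftFunctor T (1:ℤ)).map_injective (by rw [e3, Functor.map_zero]))
    · -- enc q < enc qm
      have h2 : (q.2 : ℤ) < (qm.2 : ℤ) := by exact_mod_cast hc
      have h1 : q.1 ≤ qm.1 := by omega
      have hnn : (0:ℤ) ≤ (C.n : ℤ) + 1 := by positivity
      have := mul_le_mul_of_nonneg_right h1 hnn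
      have : C.enc q < C.enc qm := by
        unfold Ctx.enc
        nlinarith
      omega

end AuxNC4
section AuxNC5
set_option linter.unusedSectionVars false
set_option maxHeartbeats 1000000

/-- towers with factors shifted generators, with each factor dominating its tail -/
inductive GT {K : Type} [Field K] {T : Type u} [Category.{v} T] [Preadditive T]
    [HasZeroObject T] [HasShift T ℤ] [∀ n : ℤ, (CategoryTheory.shiftFunctor T n).Additive]
    [Pretriangulated T] [CategoryTheory.Linear K T] (C : Ctx K T) :
    List (ℤ × Fin (C.n + 1)) → T → Prop
  | nil {Y : T} (hY : IsZero Y) : GT C [] Y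
  | cons {Y Y' : T} {q : ℤ × Fin (C.n + 1)} {L : List (ℤ × Fin (C.n + 1))}
      (u : C.Go q ⟶ Y) (hu : u ≠ 0) (p : Y ⟶ Y') (δ : Y' ⟶ ((C.Go q)⟦(1:ℤ)⟧ : T))
      (hT : Triangle.mk u p δ ∈ distTriang T) (hL : GT C L Y')
      (hdom : ∀ q' ∈ L, C.enc q' ≤ C.enc q) : GT C (q :: L) Y

variable {K : Type} [Field K]
variable {T : Type u} [Category.{v} T] [Preadditive T] [HasZeroObject T] [HasShift T ℤ]
  [∀ n : ℤ, (CategoryTheory.shiftFunctor T n).Additive] [Pretriangulated T]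
  [CategoryTheory.Linear K T]
variable (C : Ctx K T)

lemma Ctx.exists_theta : ∃ Θ : ℤ, 1 ≤ Θ ∧ ∀ (c d : Fin (C.n + 1)) (m : ℤ)
    (g : C.E c ⟶ ((C.E d)⟦m⟧ : T)), g ≠ 0 → m ≤ Θ := by
  have hfin : (⋃ (c : Fin (C.n+1)) (d : Fin (C.n+1)),
      {m : ℤ | ∃ g : C.E c ⟶ ((C.E d)⟦m⟧ : T), g ≠ 0}).Finite :=
    Set.finite_iUnion fun c => Set.finite_iUnion fun d => (C.hproper _ _).1
  obtain ⟨b, hb⟩ := hfin.bddAbove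
  exact ⟨max b 1, le_max_right _ _, fun c d m g hg =>
    le_trans (hb (Set.mem_iUnion.2 ⟨c, Set.mem_iUnion.2 ⟨d, ⟨g, hg⟩⟩⟩)) (le_max_left _ _)⟩

/-- the lower bound function for shifts appearing in towers -/
def Ctx.fC (τ Θ : ℤ) (c : Fin (C.n + 1)) : ℤ := τ - ((C.n : ℤ) - (c : ℤ)) * Θ

/-- invariant: all generators mapping nontrivially to `Y` sit above the bound -/
def Ctx.Inv (τ Θ : ℤ) (Y : T) : Prop := ∀ q, C.nv Y q → C.fC τ Θ q.2 ≤ q.1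

lemma Ctx.inv_prop {τ Θ : ℤ} (hΘ1 : 1 ≤ Θ)
    (hΘ : ∀ (c d : Fin (C.n + 1)) (m : ℤ) (g : C.E c ⟶ ((C.E d)⟦m⟧ : T)), g ≠ 0 → m ≤ Θ)
    {Y Y' : T} {qm : ℤ × Fin (C.n + 1)} (hInv : C.Inv τ Θ Y) (hqm : C.nv Y qm)
    (u : C.Go qm ⟶ Y) (hu : u ≠ 0) (p : Y ⟶ Y') (δ : Y' ⟶ ((C.Go qm)⟦(1:ℤ)⟧ : T))
    (hT : Triangle.mk u p δ ∈ distTriang T) : C.Inv τ Θ Y' := by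
  rintro q ⟨f, hf⟩
  by_cases hz : f ≫ δ = 0
  · obtain ⟨g, hg⟩ := Pretriangulated.Triangle.coyoneda_exact₃ _ hT f hz
    have hgne : g ≠ 0 := fun h => hf (by rw [hg, h]; exact zero_comp)
    exact hInv q ⟨g, hgne⟩
  · have hg2 : (f ≫ δ ≫ (C.GoSucc qm).hom : C.Go q ⟶ C.Go (qm.1 + 1, qm.2)) ≠ 0 := by
      intro h0
      apply hz
      calc f ≫ δ = (f ≫ δ ≫ (C.GoSucc qm).hom) ≫ (C.GoSucc qm).inv := by simp
      _ = 0 := by rw [h0, zero_comp]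
    obtain ⟨g, hg⟩ := C.bridgeGo _ hg2
    have hm : (qm.1 + 1, qm.2).1 - q.1 ≤ Θ := hΘ _ _ _ g hg
    have htm : C.fC τ Θ qm.2 ≤ qm.1 := hInv qm hqm
    rcases C.homEE g hg with ⟨hceq, hkeq⟩ | ⟨hclt, hk1⟩
    · have hq1 : q.1 = qm.1 + 1 := by
        have h5 : (qm.1 + 1, qm.2).1 - q.1 = 0 := hkeq
        simp only at h5
        omega
      rw [hceq]
      show C.fC τ Θ qm.2 ≤ q.1
      omega
    · have hc2 : (q.2 : ℤ) < (qm.2 : ℤ) := by exact_mod_cast hclt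
      have hq2 : (0:ℤ) ≤ (q.2 : ℤ) := by positivity
      have hqm2 : (qm.2 : ℤ) ≤ (C.n : ℤ) := by
        have := qm.2.is_lt; exact_mod_cast Nat.lt_succ_iff.mp this
      unfold Ctx.fC at htm ⊢
      simp only at hm
      have hmul := mul_le_mul_of_nonneg_right
        (show ((C.n:ℤ) - (qm.2:ℤ)) + 1 ≤ ((C.n:ℤ) - (q.2:ℤ)) by omega)
        (show (0:ℤ) ≤ Θ by omega)
      rw [add_mul, one_mul] at hmul
      linarith

lemma Ctx.enc_lower {τ Θ : ℤ} (hΘ1 : 1 ≤ Θ) {Y : T} {q : ℤ × Fin (C.n + 1)}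
    (hInv : C.Inv τ Θ Y) (hq : C.nv Y q) :
    (τ - ((C.n:ℤ)+1)*Θ) * ((C.n:ℤ)+1) ≤ C.enc q := by
  have h1 : C.fC τ Θ q.2 ≤ q.1 := hInv q hq
  have hq2 : (0:ℤ) ≤ (q.2 : ℤ) := by positivity
  have hqn : (q.2 : ℤ) ≤ (C.n : ℤ) := by
    have := q.2.is_lt; exact_mod_cast Nat.lt_succ_iff.mp this
  have hmul1 := mul_le_mul_of_nonneg_right
    (show ((C.n:ℤ) - (q.2:ℤ)) ≤ ((C.n:ℤ)+1) by omega) (show (0:ℤ) ≤ Θ by omega)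
  have h2 : (τ - ((C.n:ℤ)+1)*Θ) ≤ q.1 := by
    unfold Ctx.fC at h1
    linarith
  have hmul2 := mul_le_mul_of_nonneg_right h2 (show (0:ℤ) ≤ (C.n:ℤ)+1 by positivity)
  unfold Ctx.enc
  linarith

lemma Ctx.tower_exists {τ Θ : ℤ} (hΘ1 : 1 ≤ Θ)
    (hΘ : ∀ (c d : Fin (C.n + 1)) (m : ℤ) (g : C.E c ⟶ ((C.E d)⟦m⟧ : T)), g ≠ 0 → m ≤ Θ) :
    ∀ (R D : ℕ) (Y : T), ¬ IsZero Y → C.Inv τ Θ Y →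
    ∀ qm, C.nv Y qm → (∀ q, C.nv Y q → C.enc q ≤ C.enc qm) →
    (C.enc qm - (τ - ((C.n:ℤ)+1)*Θ) * ((C.n:ℤ)+1)).toNat ≤ R → C.hdim qm Y ≤ D →
    ∃ L, GT C (qm :: L) Y ∧ ∀ q ∈ L, C.enc q ≤ C.enc qm := by
  intro R
  induction R using Nat.strong_induction_on with
  | _ R ihR =>
  intro D
  induction D using Nat.strong_induction_on with
  | _ D ihD =>
  intro Y hY hInv qm hqm hmax hR hD
  obtain ⟨u, hu⟩ := hqm
  obtain ⟨Y', p, δ, hT⟩ := Pretriangulated.distinguished_cocone_triangle u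
  by_cases hz : IsZero Y'
  · exact ⟨[], GT.cons u hu p δ hT (GT.nil hz) (by simp), by simp⟩
  · have hInv' : C.Inv τ Θ Y' := C.inv_prop hΘ1 hΘ hInv ⟨u, hu⟩ u hu p δ hT
    have hbd : ∀ q, C.nv Y' q → C.enc q ≤ C.enc qm := C.key_bound hmax u hu p δ hT
    obtain ⟨qm', hqm', hmax'⟩ := C.exists_max Y' hz
    have hle : C.enc qm' ≤ C.enc qm := hbd qm' hqm'
    have hdrop : C.hdim qm Y = C.hdim qm Y' + 1 := C.hdim_drop u hu p δ hT
    have h1le : 1 ≤ C.hdim qm Y := C.hdim_pos qm Y ⟨u, hu⟩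
    rcases eq_or_lt_of_le hle with heq | hlt
    · have hqq : qm' = qm := C.enc_inj heq
      subst hqq
      obtain ⟨L', hL', hdom'⟩ := ihD (D-1) (by omega) Y' hz hInv' qm' hqm' hmax' hR (by omega)
      refine ⟨qm' :: L', GT.cons u hu p δ hT hL' ?_, ?_⟩
      · intro q' hq'
        rcases List.mem_cons.1 hq' with rfl | hmem
        · exact le_refl _
        · exact hdom' q' hmem
      · intro q' hq'
        rcases List.mem_cons.1 hq' with rfl | hmem
        · exact le_refl _
        · exact hdom' q' hmem
    · have hlow := C.enc_lower hΘ1 hInv' hqm'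
      have hRk : (C.enc qm' - (τ - ((C.n:ℤ)+1)*Θ) * ((C.n:ℤ)+1)).toNat < R := by
        have hlow2 := C.enc_lower hΘ1 hInv ⟨u, hu⟩
        omega
      obtain ⟨L', hL', hdom'⟩ := ihR _ hRk (C.hdim qm' Y') Y' hz hInv' qm' hqm' hmax'
        (le_refl _) (le_refl _)
      refine ⟨qm' :: L', GT.cons u hu p δ hT hL' ?_, ?_⟩
      · intro q' hq'
        rcases List.mem_cons.1 hq' with rfl | hmem
        · exact le_of_lt hlt
        · exact le_trans (hdom' q' hmem) (le_of_lt hlt)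
      · intro q' hq'
        rcases List.mem_cons.1 hq' with rfl | hmem
        · exact le_of_lt hlt
        · exact le_trans (hdom' q' hmem) (le_of_lt hlt)

end AuxNC5
section AuxNC6
set_option linter.unusedSectionVars false
set_option maxHeartbeats 1000000

variable {K : Type} [Field K]
variable {T : Type u} [Category.{v} T] [Preadditive T] [HasZeroObject T] [HasShift T ℤ]
  [∀ n : ℤ, (CategoryTheory.shiftFunctor T n).Additive] [Pretriangulated T]
  [CategoryTheory.Linear K T]
variable (C : Ctx K T)

lemma Ctx.enc_le_fst {q q' : ℤ × Fin (C.n + 1)} (h : C.enc q ≤ C.enc q') : q.1 ≤ q'.1 := by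
  have h2 : (q.2 : ℤ) < (C.n:ℤ) + 1 := by exact_mod_cast q.2.is_lt
  have h2' : (q'.2 : ℤ) < (C.n:ℤ) + 1 := by exact_mod_cast q'.2.is_lt
  have h0 : (0:ℤ) ≤ (q.2 : ℤ) := by positivity
  have h0' : (0:ℤ) ≤ (q'.2 : ℤ) := by positivity
  unfold Ctx.enc at h
  by_contra hgt
  push_neg at hgt
  have := mul_le_mul_of_nonneg_right (show q'.1 + 1 ≤ q.1 by omega)
    (show (0:ℤ) ≤ (C.n:ℤ) + 1 by positivity)
  rw [add_mul, one_mul] at this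
  linarith

lemma Ctx.enc_succ (q : ℤ × Fin (C.n + 1)) :
    C.enc (q.1 + 1, q.2) = C.enc q + ((C.n:ℤ) + 1) := by
  unfold Ctx.enc
  ring

/-- every map `Go q ⟶ Go (q.1+1, q.2)` is zero -/
lemma Ctx.self_succ_vanish (q : ℤ × Fin (C.n + 1)) (h : C.Go q ⟶ ((C.Go q)⟦(1:ℤ)⟧ : T)) :
    h = 0 := by
  by_contra hne
  have h2 : (h ≫ (C.GoSucc q).hom : C.Go q ⟶ C.Go (q.1 + 1, q.2)) ≠ 0 := by
    intro h0
    apply hne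
    calc h = (h ≫ (C.GoSucc q).hom) ≫ (C.GoSucc q).inv := by simp
    _ = 0 := by rw [h0, zero_comp]
  rcases C.GoEE _ h2 with heq | ⟨hlt, _⟩
  · have := congrArg Prod.fst heq
    simp only at this
    omega
  · exact absurd hlt (lt_irrefl _)

lemma Ctx.tower_vanish (Z : T) {L : List (ℤ × Fin (C.n + 1))} {Y : T} (hGT : GT C L Y)
    (hv : ∀ q ∈ L, ∀ h : C.Go q ⟶ Z, h = 0) : ∀ h : Y ⟶ Z, h = 0 := by
  induction hGT with
  | nil hY => intro h; exact hY.eq_of_src h 0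
  | @cons Y Y' q L u hu p δ hT hL hdom ih =>
    intro h
    have h1 : u ≫ h = 0 := hv q List.mem_cons_self _
    obtain ⟨g, hg⟩ := Pretriangulated.Triangle.yoneda_exact₂ _ hT h h1
    rw [hg, ih (fun q' hq' => hv q' (List.mem_cons_of_mem _ hq')) g]
    exact comp_zero

lemma Ctx.tower_out {L : List (ℤ × Fin (C.n + 1))} {Y : T} (hGT : GT C L Y) (hne : L ≠ []) :
    ∃ ql, ql ∈ L ∧ (∀ q' ∈ L, C.enc ql ≤ C.enc q') ∧ ∃ g : Y ⟶ C.Go ql, g ≠ 0 := by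
  induction hGT with
  | nil hY => exact absurd rfl hne
  | @cons Y Y' q L u hu p δ hT hL hdom ih =>
    have hYnz : ¬ IsZero Y := by
      intro hz
      exact hu (hz.eq_of_tgt u 0)
    by_cases hL0 : L = []
    · subst hL0
      have hzY' : IsZero Y' := by cases hL with | nil h => exact h
      have hp0 : p = 0 := hzY'.eq_of_tgt p 0
      obtain ⟨r, hr⟩ := Pretriangulated.Triangle.coyoneda_exact₂ _ hT (𝟙 Y)
        (by exact (Category.id_comp _).trans hp0)
      refine ⟨q, List.mem_singleton_self q, by simp, r, ?_⟩
      intro hr0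
      apply hYnz
      rw [IsZero.iff_id_eq_zero, hr, hr0]
      exact zero_comp
    · obtain ⟨ql, hmem, hmin, g', hg'⟩ := ih hL0
      have henc : C.enc ql ≤ C.enc q := hdom ql hmem
      refine ⟨ql, List.mem_cons_of_mem _ hmem, ?_, p ≫ g', ?_⟩
      · intro q' hq'
        rcases List.mem_cons.1 hq' with rfl | hm
        · exact henc
        · exact hmin q' hm
      · intro h0
        have hrot := rot_of_distTriang _ hT
        obtain ⟨w, hw⟩ := Pretriangulated.Triangle.yoneda_exact₂ _ hrot g' h0
        -- hw : g' = δ ≫ w with w : (Go q)⟦1⟧ ⟶ Go ql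
        have hwne : w ≠ 0 := by
          intro hw0
          apply hg'
          rw [hw, hw0]
          exact comp_zero
        have hw2 : ((C.GoSucc q).inv ≫ w : C.Go (q.1 + 1, q.2) ⟶ C.Go ql) ≠ 0 := by
          intro h1
          apply hwne
          exact (Iso.hom_inv_id_assoc _ _).symm.trans
            ((congrArg (fun x => (C.GoSucc q).hom ≫ x) h1).trans comp_zero)
        have := C.GoEE_enc _ hw2
        rw [C.enc_succ q] at this
        have hnn : (0:ℤ) ≤ (C.n:ℤ) := by positivity
        omega

end AuxNC6
section AuxNC7
set_option linter.unusedSectionVars false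
set_option maxHeartbeats 1000000

variable {K : Type} [Field K]
variable {T : Type u} [Category.{v} T] [Preadditive T] [HasZeroObject T] [HasShift T ℤ]
  [∀ n : ℤ, (CategoryTheory.shiftFunctor T n).Additive] [Pretriangulated T]
  [CategoryTheory.Linear K T]
variable (C : Ctx K T)

lemma Ctx.main1 (X : T) (hX : IsExcT K X) (hs : C.σ.semistable X) :
    ∃ (i : Fin (C.n + 1)) (j : ℤ), Nonempty (X ≅ ((C.E i)⟦j⟧ : T)) := by
  obtain ⟨hXnz, φ, hφ⟩ := hs
  obtain ⟨Θ, hΘ1, hΘ⟩ := C.exists_theta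
  obtain ⟨τ0, hτ0⟩ : ∃ τ0 : ℤ, ∀ q, C.nv X q → τ0 ≤ q.1 := by
    obtain ⟨b, hb⟩ := ((C.nv_finite X).image (fun q => q.1)).bddBelow
    exact ⟨b, fun q hq => hb (Set.mem_image_of_mem _ hq)⟩
  have hInv : C.Inv τ0 Θ X := by
    intro q hq
    have h1 := hτ0 q hq
    have hq2 : (q.2 : ℤ) ≤ (C.n : ℤ) := by
      have := q.2.is_lt; exact_mod_cast Nat.lt_succ_iff.mp this
    have h2 : (0:ℤ) ≤ ((C.n:ℤ) - (q.2:ℤ)) * Θ :=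
      mul_nonneg (by omega) (by omega)
    unfold Ctx.fC
    omega
  obtain ⟨qm, hqm, hmax⟩ := C.exists_max X hXnz
  obtain ⟨L, hGT, hdomL⟩ := C.tower_exists hΘ1 hΘ _ _ X hXnz hInv qm hqm hmax
    (le_refl _) (le_refl _)
  obtain ⟨ql, hqlmem, hqlmin, g, hg⟩ := C.tower_out hGT (List.cons_ne_nil qm L)
  cases hGT with
  | cons u hu p δ hT hL hdom2 =>
  -- phase inequalities
  have hps1 : C.φs qm.2 + (qm.1 : ℝ) ≤ φ := by
    by_contra hlt
    push_neg at hlt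
    exact hu (C.σ.hom_zero (C.Go_mem qm) hφ hlt u)
  have hps2 : φ ≤ C.φs ql.2 + (ql.1 : ℝ) := by
    by_contra hlt
    push_neg at hlt
    exact hg (C.σ.hom_zero hφ (C.Go_mem ql) hlt g)
  have hql_le : C.enc ql ≤ C.enc qm := hqlmin qm List.mem_cons_self
  have htle : ql.1 ≤ qm.1 := C.enc_le_fst hql_le
  -- derive ql = qm
  have hqleq : ql = qm := by
    by_cases htq : ql.1 = qm.1
    · have hcle : (ql.2 : ℤ) ≤ (qm.2 : ℤ) := by
        unfold Ctx.enc at hql_le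
        rw [htq] at hql_le
        omega
      have hc1 : ((ql.1 : ℝ)) = ((qm.1 : ℝ)) := by exact_mod_cast htq
      have hreal : C.φs qm.2 ≤ C.φs ql.2 := by linarith
      have hcle' : ql.2 ≤ qm.2 := by
        rw [Fin.le_def]
        exact_mod_cast hcle
      rcases lt_or_eq_of_le hcle' with hlt | heq
      · exact absurd (C.hinc _ _ hlt) (by linarith)
      · exact Prod.ext htq heq
    · exfalso
      have h1 : ql.1 + 1 ≤ qm.1 := by omega
      have habs := C.hgap ql.2 qm.2
      rw [abs_lt] at habs
      have hcast : ((ql.1 : ℤ) : ℝ) + 1 ≤ ((qm.1 : ℤ) : ℝ) := by exact_mod_cast h1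
      linarith [habs.1, habs.2]
  -- all elements of L are equal to qm
  have hallL : ∀ q' ∈ L, q' = qm := by
    intro q' hq'
    apply C.enc_inj
    have h1 := hdom2 q' hq'
    have h2 := hqlmin q' (List.mem_cons_of_mem _ hq')
    rw [hqleq] at h2
    omega
  -- δ = 0
  have hδ : δ = 0 := by
    refine C.tower_vanish _ hL ?_ δ
    intro q' hq'
    have hqe := hallL q' hq'
    subst hqe
    intro h
    exact C.self_succ_vanish _ h
  -- retraction
  have hinvrot := inv_rot_of_distTriang _ hT
  have hmor1 : (Triangle.mk u p δ).invRotate.mor₁ = 0 := by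
    simp [Triangle.invRotate, hδ]
    erw [Functor.map_zero]
    simp
    rfl
  obtain ⟨r, hr⟩ : ∃ r : X ⟶ C.Go qm, 𝟙 (C.Go qm) = u ≫ r :=
    Pretriangulated.Triangle.yoneda_exact₂ _ hinvrot (𝟙 (C.Go qm))
    (by rw [hmor1]; exact zero_comp)
  have hr' : 𝟙 (C.Go qm) = u ≫ r := hr
  -- idempotent argument
  haveI : FiniteDimensional K (X ⟶ X) := aux_fdEnd (K := K) X C.hproper
  have hidX : (𝟙 X : X ⟶ X) ≠ 0 := fun h => hXnz (by rw [IsZero.iff_id_eq_zero]; exact h)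
  obtain ⟨a, ha⟩ := aux_scalar (K := K) hX.1 hidX (r ≫ u)
  have hidem : (r ≫ u) ≫ (r ≫ u) = r ≫ u := by
    calc (r ≫ u) ≫ (r ≫ u) = r ≫ (u ≫ r) ≫ u := by simp only [Category.assoc]
    _ = r ≫ u := by rw [← hr', Category.id_comp]
  have haa : a * a = a := by
    have h2 : ((a * a) • 𝟙 X : X ⟶ X) = a • 𝟙 X := by
      calc ((a * a) • 𝟙 X : X ⟶ X) = (a • 𝟙 X) ≫ (a • 𝟙 X) := by
            simp [Linear.smul_comp, Linear.comp_smul, smul_smul]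
      _ = (r ≫ u) ≫ (r ≫ u) := by rw [← ha]
      _ = r ≫ u := hidem
      _ = a • 𝟙 X := ha
    have h3 : ((a * a - a) • 𝟙 X : X ⟶ X) = 0 := by rw [sub_smul, h2, sub_self]
    rcases smul_eq_zero.1 h3 with h4 | h4
    · exact sub_eq_zero.1 h4
    · exact absurd h4 hidX
  have ha01 : a = 0 ∨ a = 1 := by
    have h5 : a * (a - 1) = 0 := by rw [mul_sub, mul_one, haa, sub_self]
    rcases mul_eq_zero.1 h5 with h | h
    · exact Or.inl h
    · exact Or.inr (sub_eq_zero.1 h)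
  rcases ha01 with h0 | h1
  · exfalso
    apply hu
    have hz0 : r ≫ u = 0 := by rw [ha, h0, zero_smul]
    calc u = (u ≫ r) ≫ u := by rw [← hr', Category.id_comp]
    _ = u ≫ (r ≫ u) := by rw [Category.assoc]
    _ = 0 := by rw [hz0, comp_zero]
  · have h2 : r ≫ u = 𝟙 X := by rw [ha, h1, one_smul]
    exact ⟨qm.2, qm.1, ⟨{ hom := r, inv := u, hom_inv_id := h2, inv_hom_id := hr'.symm }⟩⟩

end AuxNC7

/-- Let `σ` be a (locally finite) stability condition on a proper `K`-linear pretriangulated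
category `T` and `(E₀, …, Eₙ)` a full `σ`-exceptional collection with strictly increasing
phases. Then every `σ`-semistable exceptional object of `T` is isomorphic to some `(E i)⟦j⟧`;
in particular, up to shift and isomorphism there are exactly `n + 1` `σ`-semistable
exceptional objects. -/
theorem statement_2 (K : Type) [Field K]
    {T : Type u} [Category.{v} T] [Preadditive T] [HasZeroObject T] [HasShift T ℤ]
    [∀ n : ℤ, (CategoryTheory.shiftFunctor T n).Additive] [Pretriangulated T]
    [CategoryTheory.Linear K T]
    (hproper : IsProper (T := T) K)
    (σ : Stab T) (n : ℕ) (E : Fin (n + 1) → T) (φs : Fin (n + 1) → ℝ)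
    (hexc : ∀ i, IsExcT K (E i))
    (hcoll : ∀ i j : Fin (n + 1), j < i → ∀ (k : ℤ) (f : E i ⟶ (E j)⟦k⟧), f = 0)
    (hfull : ∀ X : T, GeneratedBy (Set.range E) X)
    (hss : ∀ i, σ.hasPhase (E i) (φs i))
    (hExt : ∀ i j : Fin (n + 1), i ≠ j → ∀ k : ℤ, k ≤ 0 → ∀ f : E i ⟶ (E j)⟦k⟧, f = 0)
    (hgap : ∀ i j : Fin (n + 1), |φs i - φs j| < 1)
    (hinc : ∀ i j : Fin (n + 1), i < j → φs i < φs j) :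
    (∀ X : T, IsExcT K X → σ.semistable X →
      ∃ (i : Fin (n + 1)) (j : ℤ), Nonempty (X ≅ (E i)⟦j⟧)) ∧
    (∀ i, σ.semistable (E i)) ∧
    (∀ (i i' : Fin (n + 1)) (j : ℤ), Nonempty (E i ≅ (E i')⟦j⟧) → i = i' ∧ j = 0) := by
  classical
  let C : Ctx K T := ⟨σ, n, E, φs, hproper, hexc, hcoll, hfull, hss, hExt, hgap, hinc⟩
  refine ⟨?_, ?_, ?_⟩
  · intro X hX hs
    exact C.main1 X hX hs
  · intro i
    exact ⟨(hss i).1, ⟨φs i, (hss i).2⟩⟩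
  · rintro i i' j ⟨e⟩
    have hnz : ¬ IsZero (E i) := (hss i).1
    have hhom : e.hom ≠ 0 := by
      intro h
      apply hnz
      rw [IsZero.iff_id_eq_zero]
      calc 𝟙 (E i) = e.hom ≫ e.inv := by simp
      _ = 0 := by rw [h, zero_comp]
    have hinv : e.inv ≠ 0 := by
      intro h
      apply hnz
      rw [IsZero.iff_id_eq_zero]
      calc 𝟙 (E i) = e.hom ≫ e.inv := by simp
      _ = 0 := by rw [h, comp_zero]
    rcases lt_trichotomy i i' with hlt | heq | hgt
    · have h1 : shEq j (E i') (E i) e.inv ≠ 0 := (shEq_ne_zero_iff j (E i') (E i) e.inv).2 hinv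
      exact absurd (hcoll i' i hlt (-j) (shEq j (E i') (E i) e.inv)) h1
    · subst heq
      refine ⟨rfl, ?_⟩
      by_contra hj
      exact hhom ((hexc i).2 j hj e.hom)
    · exact absurd (hcoll i i' hgt j e.hom) hhom

end NC
end
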